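/- Let H be a nonzero symmetric n×n real matrix with smallest and largest eigenvalues λ_min and λ_max, and let ξ_min, ξ_max be real numbers with λ_min ≤ ξ_min ≤ ξ_max ≤ λ_max. Suppose ξ_max ≥ λ_max − (1/4)(λ_max − λ_min) and ξ_min ≤ λ_min + (1/4)(λ_max − λ_min). Then M := 2·max{|ξ_max|, |ξ_min|} satisfies ‖H‖ ≤ M ≤ 2‖H‖, where ‖H‖ = max{|λ_max|, |λ_min|} is the operator 2-norm of H. -/
import Mathlib


/-- Accuracy of the norm estimate in the first phase of the Lanczos method
with upper bound estimation (Lemma 8): if `ξ_min, ξ_max` estimate the extreme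
eigenvalues of a nonzero symmetric matrix `H` to relative precision `1/4`,
then `M := 2·max{|ξ_max|, |ξ_min|}` satisfies `‖H‖ ≤ M ≤ 2‖H‖`, where
`‖H‖ = max{|λ_max|, |λ_min|}` is the operator 2-norm of `H`. -/
theorem stmt19
    {n : ℕ} (H : Matrix (Fin n) (Fin n) ℝ) (hH : H.IsHermitian) (hne : H ≠ 0)
    (lmin lmax xmin xmax : ℝ)
    (hmin : IsLeast (Set.range hH.eigenvalues) lmin)
    (hmax : IsGreatest (Set.range hH.eigenvalues) lmax)
    (h1 : lmin ≤ xmin) (h2 : xmin ≤ xmax) (h3 : xmax ≤ lmax)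
    (h4 : xmax ≥ lmax - 1/4 * (lmax - lmin))
    (h5 : xmin ≤ lmin + 1/4 * (lmax - lmin)) :
    max |lmax| |lmin| ≤ 2 * max |xmax| |xmin| ∧
    2 * max |xmax| |xmin| ≤ 2 * max |lmax| |lmin| := by
  set M := max |xmax| |xmin| with hM
  have A1 : xmax ≤ |xmax| := le_abs_self _
  have A2 : -xmin ≤ |xmin| := neg_le_abs _
  have B1 : |xmax| ≤ M := le_max_left _ _
  have B2 : |xmin| ≤ M := le_max_right _ _
  have hM0 : 0 ≤ M := le_trans (abs_nonneg _) B1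
  have key1 : lmax ≤ 2 * M := by
    rcases le_total lmin (-lmax) with h | h
    · nlinarith
    · nlinarith
  have key2 : -lmin ≤ 2 * M := by
    rcases le_total lmin (-lmax) with h | h
    · nlinarith
    · nlinarith
  have C1 : lmax ≤ |lmax| := le_abs_self _
  have C2 : -lmin ≤ |lmin| := neg_le_abs _
  have C3 : -lmax ≤ |lmax| := neg_le_abs _
  constructor
  · apply max_le
    · rw [abs_le]
      constructor <;> nlinarith
    · rw [abs_le]
      constructor <;> nlinarith
  · have h6 : M ≤ max |lmax| |lmin| := by
      apply max_le
      · rw [abs_le]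
        constructor
        · nlinarith [neg_abs_le lmin, le_max_right |lmax| |lmin|]
        · nlinarith [le_abs_self lmax, le_max_left |lmax| |lmin|]
      · rw [abs_le]
        constructor
        · nlinarith [neg_abs_le lmin, le_max_right |lmax| |lmin|]
        · nlinarith [le_abs_self lmax, le_max_left |lmax| |lmin|]
    linarith
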